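/- The product of two nearly compact topological spaces is nearly compact. -/

import Mathlib

def IsRegOpen {X : Type*} [TopologicalSpace X] (A : Set X) : Prop :=
  A = interior (closure A)

/-- A space is nearly compact if every cover by regular open sets has a finite subcover. -/
def NearlyCompact (X : Type*) [TopologicalSpace X] : Prop :=
  ∀ 𝒰 : Set (Set X), (∀ U ∈ 𝒰, IsRegOpen U) → ⋃₀ 𝒰 = Set.univ →
    ∃ F ⊆ 𝒰, F.Finite ∧ ⋃₀ F = Set.univ

lemma IsRegOpen.isOpen {X : Type*} [TopologicalSpace X] {A : Set X} (h : IsRegOpen A) :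
    IsOpen A := by rw [h]; exact isOpen_interior

lemma regOpen_intCl {X : Type*} [TopologicalSpace X] (A : Set X) :
    IsRegOpen (interior (closure A)) := by
  refine subset_antisymm (interior_maximal subset_closure isOpen_interior) ?_
  exact interior_mono (closure_minimal interior_subset isClosed_closure)

lemma regOpen_univ {X : Type*} [TopologicalSpace X] : IsRegOpen (Set.univ : Set X) := by
  simp [IsRegOpen]

lemma regOpen_inter {X : Type*} [TopologicalSpace X] {U V : Set X}
    (hU : IsRegOpen U) (hV : IsRegOpen V) : IsRegOpen (U ∩ V) := by
  refine subset_antisymm (interior_maximal subset_closure (hU.isOpen.inter hV.isOpen)) ?_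
  calc interior (closure (U ∩ V)) ⊆ interior (closure U ∩ closure V) :=
        interior_mono (closure_inter_subset_inter_closure U V)
    _ = interior (closure U) ∩ interior (closure V) := interior_inter
    _ = U ∩ V := by rw [← hU, ← hV]

lemma regOpen_biInter {X ι : Type*} [TopologicalSpace X] (s : Finset ι) (f : ι → Set X)
    (h : ∀ i ∈ s, IsRegOpen (f i)) : IsRegOpen (⋂ i ∈ s, f i) := by
  classical
  induction s using Finset.induction_on with
  | empty => simpa using regOpen_univ
  | insert _ _ hx ih =>
      rename_i a t
      rw [Finset.set_biInter_insert]
      exact regOpen_inter (h a (Finset.mem_insert_self a t))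
        (ih fun i hi => h i (Finset.mem_insert_of_mem hi))

lemma regOpen_prod {X Y : Type*} [TopologicalSpace X] [TopologicalSpace Y]
    {U : Set X} {V : Set Y} (hU : IsRegOpen U) (hV : IsRegOpen V) :
    IsRegOpen (U ×ˢ V) := by
  unfold IsRegOpen
  rw [closure_prod_eq, interior_prod_eq, ← hU, ← hV]

/-- Indexed version of near compactness. -/
lemma nc_indexed {X : Type*} [TopologicalSpace X] (h : NearlyCompact X) {ι : Type*}
    (V : ι → Set X) (hV : ∀ i, IsRegOpen (V i)) (hcov : ⋃ i, V i = Set.univ) :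
    ∃ t : Finset ι, ⋃ i ∈ t, V i = Set.univ := by
  classical
  obtain ⟨F, hFsub, hFfin, hFcov⟩ := h (Set.range V) (by rintro _ ⟨i, rfl⟩; exact hV i)
    (by rw [Set.sUnion_range]; exact hcov)
  choose g hg using fun s (hs : s ∈ F) => hFsub hs
  refine ⟨hFfin.toFinset.attach.image (fun s => g s.1 (hFfin.mem_toFinset.mp s.2)), ?_⟩
  apply Set.eq_univ_of_univ_subset
  rw [← hFcov]
  rintro x ⟨s, hsF, hxs⟩
  simp only [Set.mem_iUnion, Finset.mem_image, Finset.mem_attach]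
  exact ⟨g s hsF, ⟨⟨s, hFfin.mem_toFinset.mpr hsF⟩, trivial, rfl⟩,
    by rw [hg s hsF]; exact hxs⟩

theorem nearlyCompact_prod {X Y : Type*} [TopologicalSpace X] [TopologicalSpace Y]
    (hX : NearlyCompact X) (hY : NearlyCompact Y) : NearlyCompact (X × Y) := by
  classical
  intro 𝒰 hreg hcov
  -- For each point, find a regular-open rectangle inside a member of 𝒰.
  have key : ∀ p : X × Y, ∃ U V W, W ∈ 𝒰 ∧ IsRegOpen U ∧ IsRegOpen V ∧
      p.1 ∈ U ∧ p.2 ∈ V ∧ U ×ˢ V ⊆ W := by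
    intro p
    have : p ∈ ⋃₀ 𝒰 := by rw [hcov]; trivial
    obtain ⟨W, hW𝒰, hpW⟩ := this
    have hWopen : IsOpen W := (hreg W hW𝒰).isOpen
    obtain ⟨u, v, hu, hv, hpu, hpv, huv⟩ := isOpen_prod_iff.mp hWopen p.1 p.2 hpW
    refine ⟨interior (closure u), interior (closure v), W, hW𝒰,
      regOpen_intCl u, regOpen_intCl v,
      interior_maximal subset_closure hu hpu, interior_maximal subset_closure hv hpv, ?_⟩
    have : interior (closure u) ×ˢ interior (closure v) = interior (closure (u ×ˢ v)) := by
      rw [closure_prod_eq, interior_prod_eq]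
    rw [this]
    calc interior (closure (u ×ˢ v)) ⊆ interior (closure W) :=
          interior_mono (closure_mono huv)
      _ = W := (hreg W hW𝒰).symm
  choose U V W hW𝒰 hU hV hpU hpV hsub using key
  -- For each x, cover Y by the V (x, y) and take a finite subcover t x.
  have hYx : ∀ x : X, ∃ t : Finset Y, ⋃ y ∈ t, V (x, y) = Set.univ := by
    intro x
    exact nc_indexed hY (fun y => V (x, y)) (fun y => hV (x, y))
      (Set.eq_univ_of_forall fun y => Set.mem_iUnion.mpr ⟨y, hpV (x, y)⟩)
  choose t ht using hYx
  -- The sets U' x = ⋂ y ∈ t x, U (x, y) are regular open and cover X.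
  set U' : X → Set X := fun x => ⋂ y ∈ t x, U (x, y) with hU'def
  have hU'reg : ∀ x, IsRegOpen (U' x) :=
    fun x => regOpen_biInter (t x) _ (fun y _ => hU (x, y))
  have hU'mem : ∀ x, x ∈ U' x :=
    fun x => Set.mem_biInter fun y _ => hpU (x, y)
  obtain ⟨s, hs⟩ := nc_indexed hX U' hU'reg
    (Set.eq_univ_of_forall fun x => Set.mem_iUnion.mpr ⟨x, hU'mem x⟩)
  -- Assemble the finite subcover.
  refine ⟨⋃ x ∈ s, (fun y => W (x, y)) '' (t x : Set Y), ?_, ?_, ?_⟩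
  · rintro _ ⟨S, ⟨x, rfl⟩, hS⟩
    simp only [Set.mem_iUnion, Set.mem_image] at hS
    obtain ⟨hxs, y, hyt, rfl⟩ := hS
    exact hW𝒰 (x, y)
  · exact Set.Finite.biUnion s.finite_toSet
      (fun x _ => ((t x).finite_toSet).image _)
  · apply Set.eq_univ_of_forall
    rintro ⟨a, b⟩
    have ha : a ∈ ⋃ x ∈ s, U' x := by rw [hs]; trivial
    obtain ⟨x, hxs, hax⟩ := Set.mem_iUnion₂.mp ha
    have hb : b ∈ ⋃ y ∈ t x, V (x, y) := by rw [ht x]; trivial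
    obtain ⟨y, hyt, hby⟩ := Set.mem_iUnion₂.mp hb
    have haU : a ∈ U (x, y) := by
      have := Set.mem_iInter₂.mp hax
      exact this y hyt
    refine Set.mem_sUnion.mpr ⟨W (x, y), ?_, hsub (x, y) ⟨haU, hby⟩⟩
    exact Set.mem_iUnion₂.mpr ⟨x, hxs, ⟨y, hyt, rfl⟩⟩
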